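/- Suppose each link performance function t_a is continuous, and let f : [0, T] → (K → ℝ) be a continuously differentiable solution of the route-choice dynamical system f'(τ) k = −J_k(f(τ)). If f(0) k = 0 for some route k ∈ K, then f(τ) k = 0 for all τ ∈ [0, T]; i.e., an initially unused route remains unused. -/
import Mathlib


open Finset

/-- Link flow on arc `a` induced by route flows `f`. -/
noncomputable def linkFlow {A K : Type*} [Fintype K] (δ : A → K → ℝ)
    (f : K → ℝ) (a : A) : ℝ :=
  ∑ k, δ a k * f k

/-- Travel time on route `k` induced by route flows `f`. -/
noncomputable def routeTime {A K : Type*} [Fintype A] [Fintype K] (δ : A → K → ℝ)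
    (t : A → ℝ → ℝ) (f : K → ℝ) (k : K) : ℝ :=
  ∑ a, t a (linkFlow δ f a) * δ a k

/-- O-D FIFO violation of route `k` at route-flow state `f`. -/
noncomputable def fifoViolation {A W K : Type*} [Fintype A] [Fintype K] [DecidableEq W]
    (od : K → W) (δ : A → K → ℝ) (t : A → ℝ → ℝ) (f : K → ℝ) (k : K) : ℝ :=
  f k * ∑ j ∈ univ.filter (fun j => od j = od k),
    (routeTime δ t f k - routeTime δ t f j) * f j

theorem unused_route_stays_unused {A W K : Type*} [Fintype A] [Fintype W] [Fintype K] [DecidableEq W]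
    (od : K → W) (δ : A → K → ℝ) (hδ : ∀ a k, δ a k = 0 ∨ δ a k = 1)
    (t : A → ℝ → ℝ)
    (ht : ∀ a, Continuous (t a)) (T : ℝ) (f : ℝ → K → ℝ)
    (hC1 : ContDiffOn ℝ 1 f (Set.Icc 0 T))
    (hsol : ∀ τ ∈ Set.Icc (0:ℝ) T,
      HasDerivWithinAt f (fun k => -fifoViolation od δ t (f τ) k) (Set.Icc 0 T) τ)
    (k : K) (h0 : f 0 k = 0) :
    ∀ τ ∈ Set.Icc (0:ℝ) T, f τ k = 0 := by
  -- Φ : route flow state ↦ the "B" factor in fifoViolation, continuous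
  set Φ : (K → ℝ) → ℝ := fun g =>
    ∑ j ∈ univ.filter (fun j => od j = od k),
      (routeTime δ t g k - routeTime δ t g j) * g j with hΦ
  have hΦcont : Continuous Φ := by
    apply continuous_finset_sum
    intro j _
    have hrt : ∀ i : K, Continuous (fun g : K → ℝ => routeTime δ t g i) := by
      intro i
      apply continuous_finset_sum
      intro a _
      exact (((ht a).comp (continuous_finset_sum _ fun l _ =>
        continuous_const.mul (continuous_apply l)))).mul continuous_const
    exact (((hrt k).sub (hrt j))).mul (continuous_apply j)
  -- continuity of τ ↦ f τ on Icc
  have hfc : ContinuousOn f (Set.Icc 0 T) := hC1.continuousOn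
  have hBc : ContinuousOn (fun τ => Φ (f τ)) (Set.Icc 0 T) :=
    hΦcont.comp_continuousOn hfc
  -- bound for Φ ∘ f on the compact interval
  obtain ⟨C, hC⟩ := (isCompact_Icc (a := (0:ℝ)) (b := T)).exists_bound_of_continuousOn hBc
  -- g := f · k
  have hgc : ContinuousOn (fun τ => f τ k) (Set.Icc 0 T) :=
    (continuous_apply k).comp_continuousOn hfc
  have hg' : ∀ τ ∈ Set.Ico (0:ℝ) T,
      HasDerivWithinAt (fun τ => f τ k) (-(f τ k * Φ (f τ))) (Set.Ici τ) τ := by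
    intro τ hτ
    have h1 := hsol τ ⟨hτ.1, le_of_lt hτ.2⟩
    have h2 : HasDerivWithinAt (fun τ => f τ k)
        (-fifoViolation od δ t (f τ) k) (Set.Icc 0 T) τ := hasDerivWithinAt_pi.1 h1 k
    have h3 : Set.Icc (0:ℝ) T ∈ nhdsWithin τ (Set.Ici τ) := by
      apply mem_nhdsWithin.2
      exact ⟨Set.Iio T, isOpen_Iio, hτ.2, fun x hx => ⟨le_trans hτ.1 hx.2, le_of_lt hx.1⟩⟩
    have := h2.mono_of_mem_nhdsWithin h3
    simpa [fifoViolation, hΦ] using this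
  have key := norm_le_gronwallBound_of_norm_deriv_right_le (δ := 0) (K := C) (ε := 0)
    hgc hg' (by simp [h0]) ?_
  · intro τ hτ
    have := key τ hτ
    rw [gronwallBound_ε0_δ0] at this
    simpa using this
  · intro τ hτ
    have hCτ := hC τ ⟨hτ.1, le_of_lt hτ.2⟩
    have : ‖f τ k * Φ (f τ)‖ ≤ C * ‖f τ k‖ := by
      rw [norm_mul, mul_comm]
      exact mul_le_mul hCτ le_rfl (norm_nonneg _) (le_trans (norm_nonneg _) hCτ)
    simpa using this
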